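/- A minimal valid function π is a facet if and only if there is no nonzero function π̄ ∈ Π̄^{E(π)} such that π + π̄ is a minimal valid function. -/

import Mathlib

/-- A finite-support function `y : ℝ → ℕ` is feasible if `∑ r, r·y(r) − f ∈ ℤ`. -/
def Feasible (f : ℝ) (y : ℝ →₀ ℕ) : Prop :=
  ∃ z : ℤ, (∑ r ∈ y.support, r * (y r : ℝ)) - f = (z : ℝ)

/-- `π` is a valid function: nonnegative, and `∑ r, π(r)·y(r) ≥ 1` for every feasible `y`. -/
def Valid (f : ℝ) (π : ℝ → ℝ) : Prop :=
  (∀ x, 0 ≤ π x) ∧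
    ∀ y : ℝ →₀ ℕ, Feasible f y → 1 ≤ ∑ r ∈ y.support, π r * (y r : ℝ)

/-- A valid function is minimal if no other valid function is pointwise ≤ it. -/
def MinimalValid (f : ℝ) (π : ℝ → ℝ) : Prop :=
  Valid f π ∧ ¬ ∃ π' : ℝ → ℝ, Valid f π' ∧ (∀ x, π' x ≤ π x) ∧ π' ≠ π

/-- `P(π)`: the set of feasible `y` with `∑ r, π(r)·y(r) = 1`. -/
def Pset (f : ℝ) (π : ℝ → ℝ) : Set (ℝ →₀ ℕ) :=
  {y | Feasible f y ∧ ∑ r ∈ y.support, π r * (y r : ℝ) = 1}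

/-- `E(π) = {(x,y) : π(x) + π(y) = π(x+y)}`. -/
def Eset (π : ℝ → ℝ) : Set (ℝ × ℝ) :=
  {p | π p.1 + π p.2 = π (p.1 + p.2)}

/-- A valid function `π` is a facet if every valid `π'` with `P(π) ⊆ P(π')` equals `π`. -/
def IsFacet (f : ℝ) (π : ℝ → ℝ) : Prop :=
  Valid f π ∧ ∀ π' : ℝ → ℝ, Valid f π' → Pset f π ⊆ Pset f π' → π' = π

/-- A valid function `π` is a weak facet if every valid `π'` with `P(π) ⊆ P(π')`
has `P(π) = P(π')`. -/
def IsWeakFacet (f : ℝ) (π : ℝ → ℝ) : Prop :=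
  Valid f π ∧ ∀ π' : ℝ → ℝ, Valid f π' → Pset f π ⊆ Pset f π' → Pset f π = Pset f π'

/-- A valid function `π` is extreme if whenever `π = (π¹ + π²)/2` with `π¹, π²` valid,
then `π¹ = π² = π`. -/
def ExtremeFunc (f : ℝ) (π : ℝ → ℝ) : Prop :=
  Valid f π ∧ ∀ π₁ π₂ : ℝ → ℝ, Valid f π₁ → Valid f π₂ →
    (∀ x, π x = (π₁ x + π₂ x) / 2) → π₁ = π ∧ π₂ = π

/-- `π` is piecewise linear: there is a closed, discrete set `B ⊆ ℝ` of breakpoints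
such that `π` is affine on each connected component of `ℝ \ B`. -/
def PiecewiseLinear (π : ℝ → ℝ) : Prop :=
  ∃ B : Set ℝ, IsClosed B ∧
    (∀ x ∈ B, ∃ ε > (0 : ℝ), ∀ y ∈ B, |y - x| < ε → y = x) ∧
    (∀ x ∉ B, ∃ a b : ℝ, ∀ z ∈ connectedComponentIn Bᶜ x, π z = a * z + b)

/-- `π` is continuous piecewise linear. -/
def ContPiecewiseLinear (π : ℝ → ℝ) : Prop :=
  PiecewiseLinear π ∧ Continuous π

/-- The space `Π̄^E`: `π̄(0)=0`, `π̄(f)=0`, additive over `E`, and ℤ-periodic. -/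
def PerturbSpace (f : ℝ) (E : Set (ℝ × ℝ)) (p : ℝ → ℝ) : Prop :=
  p 0 = 0 ∧ p f = 0 ∧ (∀ q ∈ E, p q.1 + p q.2 = p (q.1 + q.2)) ∧
    ∀ (x : ℝ) (t : ℤ), p (x + (t : ℝ)) = p x

noncomputable def wsum (g : ℝ → ℝ) (y : ℝ →₀ ℕ) : ℝ := ∑ r ∈ y.support, g r * (y r : ℝ)

lemma wsum_eq_sum (g : ℝ → ℝ) (y : ℝ →₀ ℕ) : wsum g y = y.sum fun r n => g r * (n : ℝ) := rfl

lemma wsum_add (g : ℝ → ℝ) (y₁ y₂ : ℝ →₀ ℕ) : wsum g (y₁ + y₂) = wsum g y₁ + wsum g y₂ := by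
  simp only [wsum_eq_sum]
  apply Finsupp.sum_add_index' <;> intros <;> push_cast <;> ring

lemma wsum_single (g : ℝ → ℝ) (a : ℝ) (n : ℕ) : wsum g (Finsupp.single a n) = g a * n := by
  rw [wsum_eq_sum]; exact Finsupp.sum_single_index (by simp)

lemma wsum_erase (g : ℝ → ℝ) (y : ℝ →₀ ℕ) (c : ℝ) :
    wsum g y = wsum g (y.erase c) + g c * (y c : ℝ) := by
  conv_lhs => rw [← Finsupp.erase_add_single c y]
  rw [wsum_add, wsum_single]

lemma wsum_nsmul (g : ℝ → ℝ) (S : ℝ →₀ ℕ) (m : ℕ) : wsum g (m • S) = m * wsum g S := by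
  induction m with
  | zero => simp [wsum]
  | succ n ih => rw [succ_nsmul, wsum_add, ih]; push_cast; ring

lemma wsum_nonneg {g : ℝ → ℝ} (hg : ∀ x, 0 ≤ g x) (y : ℝ →₀ ℕ) : 0 ≤ wsum g y :=
  Finset.sum_nonneg fun r _ => mul_nonneg (hg r) (Nat.cast_nonneg _)

lemma wsum_congr {g g' : ℝ → ℝ} {y : ℝ →₀ ℕ} (h : ∀ r ∈ y.support, g r = g' r) :
    wsum g y = wsum g' y := Finset.sum_congr rfl fun r hr => by rw [h r hr]

lemma wsum_term_le {g : ℝ → ℝ} (hg : ∀ x, 0 ≤ g x) {y : ℝ →₀ ℕ} {c : ℝ} (hc : c ∈ y.support) :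
    g c * (y c : ℝ) ≤ wsum g y :=
  Finset.single_le_sum (fun r _ => mul_nonneg (hg r) (Nat.cast_nonneg _)) hc

lemma feas_iff (f : ℝ) (y : ℝ →₀ ℕ) :
    Feasible f y ↔ ∃ z : ℤ, wsum (fun r => r) y - f = (z : ℝ) := Iff.rfl

lemma vsum_eq (π : ℝ → ℝ) (y : ℝ →₀ ℕ) :
    (∑ r ∈ y.support, π r * (y r : ℝ)) = wsum π y := rfl

/-- Replacement lemma: if `S` has weighted sum ≡ c (mod ℤ) and `c ∉ supp S`, then
for minimal `π`, `π c ≤ wsum π S`. -/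
lemma replace_le {f : ℝ} {π : ℝ → ℝ} (hπ : MinimalValid f π) (c : ℝ) (S : ℝ →₀ ℕ)
    (hc : c ∉ S.support) (z : ℤ) (hz : wsum (fun r => r) S - c = (z : ℝ)) :
    π c ≤ wsum π S := by
  by_contra hlt
  push_neg at hlt
  set v := wsum π S with hv
  set π' := Function.update π c v with hπ'
  have hπ'c : π' c = v := Function.update_self c v π
  have hπ'ne : ∀ x, x ≠ c → π' x = π x := fun x hx => Function.update_of_ne hx v π
  have hvalid : Valid f π' := by
    constructor
    · intro x
      rcases eq_or_ne x c with rfl | hx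
      · rw [hπ'c]; exact wsum_nonneg hπ.1.1 S
      · rw [hπ'ne x hx]; exact hπ.1.1 x
    · intro y hy
      obtain ⟨zy, hzy⟩ := (feas_iff f y).1 hy
      set m := y c with hm
      set y' := y.erase c + m • S with hy'
      have herase : wsum (fun r => r) (y.erase c) = wsum (fun r => r) y - c * m := by
        have := wsum_erase (fun r => r) y c
        linarith
      have hfeas' : Feasible f y' := by
        rw [feas_iff]
        refine ⟨zy + m * z, ?_⟩
        rw [hy', wsum_add, wsum_nsmul, herase]
        push_cast
        nlinarith [hz, hzy]
      have h1 : wsum π y' = wsum π (y.erase c) + (m : ℝ) * v := by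
        rw [hy', wsum_add, wsum_nsmul, hv]
      have h2 : wsum π' y = wsum π (y.erase c) + v * m := by
        rw [wsum_erase π' y c, hπ'c]
        congr 1
        apply wsum_congr
        intro r hr
        rw [Finsupp.support_erase] at hr
        exact hπ'ne r (Finset.ne_of_mem_erase hr)
      have := hπ.1.2 y' hfeas'
      rw [vsum_eq, h1] at this
      rw [vsum_eq, h2]
      linarith
  refine hπ.2 ⟨π', hvalid, ?_, ?_⟩
  · intro x
    rcases eq_or_ne x c with rfl | hx
    · rw [hπ'c]; linarith
    · rw [hπ'ne x hx]
  · intro h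
    have := congrFun h c
    rw [hπ'c] at this
    linarith [hlt, this.symm ▸ hlt]

section MinProps
variable {f : ℝ} {π : ℝ → ℝ}

lemma minval_zero (hπ : MinimalValid f π) : π 0 = 0 := by
  have h := replace_le hπ 0 0 (by simp) 0 (by simp [wsum])
  have h2 := hπ.1.1 0
  have : wsum π 0 = 0 := by simp [wsum]
  linarith [h, this ▸ h]

lemma min_subadd (hπ : MinimalValid f π) (a b : ℝ) : π (a + b) ≤ π a + π b := by
  rcases eq_or_ne a 0 with rfl | ha
  · rw [zero_add, minval_zero hπ]; linarith [le_refl (π b)]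
  rcases eq_or_ne b 0 with rfl | hb
  · rw [add_zero, minval_zero hπ]; linarith [le_refl (π a)]
  have hS : wsum π (Finsupp.single a 1 + Finsupp.single b 1) = π a + π b := by
    rw [wsum_add, wsum_single, wsum_single]; push_cast; ring
  have hid : wsum (fun r => r) (Finsupp.single a 1 + Finsupp.single b 1) = a + b := by
    rw [wsum_add, wsum_single, wsum_single]; push_cast; ring
  have hc : a + b ∉ (Finsupp.single a 1 + Finsupp.single b 1).support := by
    intro hmem
    have := Finsupp.support_add hmem
    simp only [Finset.mem_union, Finsupp.support_single_ne_zero _ (one_ne_zero),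
      Finset.mem_singleton] at this
    rcases this with h | h
    · exact hb (by linarith)
    · exact ha (by linarith)
  have := replace_le hπ (a + b) _ hc 0 (by rw [hid]; simp)
  rw [hS] at this
  exact this

lemma min_per_one (hπ : MinimalValid f π) (x : ℝ) : π (x + 1) = π x := by
  have h1 : π (x + 1) ≤ π x := by
    have hc : x + 1 ∉ (Finsupp.single x 1).support := by
      rw [Finsupp.support_single_ne_zero _ (one_ne_zero)]
      simp
    have := replace_le hπ (x + 1) (Finsupp.single x 1) hc (-1)
      (by rw [wsum_single]; push_cast; ring)
    rwa [wsum_single, Nat.cast_one, mul_one] at this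
  have h2 : π x ≤ π (x + 1) := by
    have hc : x ∉ (Finsupp.single (x + 1) 1).support := by
      rw [Finsupp.support_single_ne_zero _ (one_ne_zero)]
      simp
    have := replace_le hπ x (Finsupp.single (x + 1) 1) hc 1
      (by rw [wsum_single]; push_cast; ring)
    rwa [wsum_single, Nat.cast_one, mul_one] at this
  linarith

lemma min_per (hπ : MinimalValid f π) (x : ℝ) (t : ℤ) : π (x + t) = π x := by
  induction t using Int.induction_on with
  | zero => simp
  | succ k ih =>
    have : x + ((k : ℤ) + 1 : ℤ) = (x + k) + 1 := by push_cast; ring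
    rw [this, min_per_one hπ]
    exact ih
  | pred k ih =>
    have h := min_per_one hπ (x + ((-(k : ℤ) - 1 : ℤ) : ℝ))
    have e : (x + ((-(k:ℤ) - 1 : ℤ) : ℝ)) + 1 = x + ((-(k:ℤ) : ℤ) : ℝ) := by push_cast; ring
    rw [e] at h
    rw [← h]
    exact ih

lemma min_f_one (hf : f ∈ Set.Ioo (0:ℝ) 1) (hπ : MinimalValid f π) : π f = 1 := by
  have hfeas : Feasible f (Finsupp.single f 1) := by
    rw [feas_iff]
    exact ⟨0, by rw [wsum_single]; push_cast; ring⟩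
  have hge : 1 ≤ π f := by
    have := hπ.1.2 _ hfeas
    rw [vsum_eq, wsum_single, Nat.cast_one, mul_one] at this
    exact this
  by_contra hne
  have hgt : 1 < π f := lt_of_le_of_ne hge (fun h => hne h.symm)
  set π' := Function.update π f 1 with hπ'
  have hπ'f : π' f = 1 := Function.update_self f 1 π
  have hπ'ne : ∀ x, x ≠ f → π' x = π x := fun x hx => Function.update_of_ne hx 1 π
  have hπ'nn : ∀ x, 0 ≤ π' x := by
    intro x
    rcases eq_or_ne x f with rfl | hx
    · rw [hπ'f]; norm_num
    · rw [hπ'ne x hx]; exact hπ.1.1 x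
  have hvalid : Valid f π' := by
    refine ⟨hπ'nn, fun y hy => ?_⟩
    rw [vsum_eq]
    by_cases hmem : f ∈ y.support
    · have h1 : π' f * (y f : ℝ) ≤ wsum π' y := wsum_term_le hπ'nn hmem
      have h2 : (1 : ℝ) ≤ (y f : ℝ) := by
        rw [Finsupp.mem_support_iff] at hmem
        exact_mod_cast Nat.one_le_iff_ne_zero.mpr hmem
      rw [hπ'f, one_mul] at h1
      linarith
    · have : wsum π' y = wsum π y := wsum_congr fun r hr => hπ'ne r (fun h => hmem (h ▸ hr))
      rw [this]
      have := hπ.1.2 y hy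
      rwa [vsum_eq] at this
  refine hπ.2 ⟨π', hvalid, ?_, ?_⟩
  · intro x
    rcases eq_or_ne x f with rfl | hx
    · rw [hπ'f]; linarith
    · rw [hπ'ne x hx]
  · intro h
    have := congrFun h f
    rw [hπ'f] at this
    linarith

lemma min_le_one (hπ : MinimalValid f π) (x : ℝ) : π x ≤ 1 := by
  set π' := fun x => min (π x) 1 with hπ'
  have hπ'nn : ∀ x, 0 ≤ π' x := fun x => le_min (hπ.1.1 x) zero_le_one
  have hvalid : Valid f π' := by
    refine ⟨hπ'nn, fun y hy => ?_⟩
    rw [vsum_eq]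
    by_cases hbig : ∃ r ∈ y.support, 1 < π r
    · obtain ⟨r₀, hr₀, hgt⟩ := hbig
      have h1 : π' r₀ * (y r₀ : ℝ) ≤ wsum π' y := wsum_term_le hπ'nn hr₀
      have h2 : (1 : ℝ) ≤ (y r₀ : ℝ) := by
        rw [Finsupp.mem_support_iff] at hr₀
        exact_mod_cast Nat.one_le_iff_ne_zero.mpr hr₀
      have h3 : π' r₀ = 1 := min_eq_right (le_of_lt hgt)
      rw [h3, one_mul] at h1
      linarith
    · push_neg at hbig
      have : wsum π' y = wsum π y := wsum_congr fun r hr => min_eq_left (hbig r hr)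
      rw [this]
      have := hπ.1.2 y hy
      rwa [vsum_eq] at this
  by_contra hgt
  push_neg at hgt
  refine hπ.2 ⟨π', hvalid, fun z => min_le_left _ _, ?_⟩
  intro h
  have := congrFun h x
  simp only [hπ'] at this
  rw [min_eq_right (le_of_lt hgt)] at this
  linarith

end MinProps

/-- Chain lemma: subadditivity bounds the weighted sum, and equality propagates
to any function additive on `E(π)`. -/
lemma chain_lemma (π p : ℝ → ℝ) (hsub : ∀ a b, π (a + b) ≤ π a + π b) (hπ0 : π 0 = 0)
    (hp0 : p 0 = 0) (hadd : ∀ x y, π x + π y = π (x + y) → p x + p y = p (x + y))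
    (y : ℝ →₀ ℕ) :
    π (wsum (fun r => r) y) ≤ wsum π y ∧
      (π (wsum (fun r => r) y) = wsum π y → p (wsum (fun r => r) y) = wsum p y) := by
  induction y using Finsupp.induction with
  | zero => constructor <;> simp [wsum, hπ0, hp0]
  | single_add a n y hay hn ih =>
    have key : ∀ (m : ℕ) (t : ℝ), π (a * m + t) ≤ m * π a + π t ∧
        (π (a * m + t) = m * π a + π t → p (a * m + t) = m * p a + p t) := by
      intro m
      induction m with
      | zero => intro t; norm_num
      | succ k ihk =>
        intro t
        have e : a * ((k : ℕ) + 1 : ℝ) + t = a + (a * k + t) := by ring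
        have h1 := hsub a (a * k + t)
        obtain ⟨h2, h2e⟩ := ihk t
        constructor
        · push_cast
          rw [e]
          linarith
        · intro heq
          push_cast at heq ⊢
          rw [e] at heq ⊢
          have e2 : π (a * k + t) = k * π a + π t := le_antisymm h2 (by linarith)
          have e1 : π a + π (a * k + t) = π (a + (a * k + t)) := by linarith
          have := hadd a (a * k + t) e1
          have := h2e e2
          linarith
    have hσ : wsum (fun r => r) (Finsupp.single a n + y)
        = a * n + wsum (fun r => r) y := by
      rw [wsum_add, wsum_single]
    have hπs : wsum π (Finsupp.single a n + y) = π a * n + wsum π y := by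
      rw [wsum_add, wsum_single]
    have hps : wsum p (Finsupp.single a n + y) = p a * n + wsum p y := by
      rw [wsum_add, wsum_single]
    obtain ⟨k1, k2⟩ := key n (wsum (fun r => r) y)
    obtain ⟨i1, i2⟩ := ih
    constructor
    · rw [hσ, hπs]; linarith
    · intro heq
      rw [hσ, hπs] at heq
      rw [hσ, hps]
      have e2 : π (wsum (fun r => r) y) = wsum π y := le_antisymm i1 (by linarith)
      have e1 : π (a * n + wsum (fun r => r) y) = n * π a + π (wsum (fun r => r) y) := by
        linarith
      have := k2 e1
      have := i2 e2
      linarith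

lemma pair_feasible (f x : ℝ) :
    Feasible f (Finsupp.single x 1 + Finsupp.single (f - x) 1) := by
  rw [feas_iff]
  refine ⟨0, ?_⟩
  rw [wsum_add, wsum_single, wsum_single]
  push_cast; ring

lemma pair_sum (g : ℝ → ℝ) (f x : ℝ) :
    wsum g (Finsupp.single x 1 + Finsupp.single (f - x) 1) = g x + g (f - x) := by
  rw [wsum_add, wsum_single, wsum_single]; push_cast; ring

lemma min_sym_ge {f : ℝ} {π : ℝ → ℝ} (hπ : MinimalValid f π) (x : ℝ) :
    1 ≤ π x + π (f - x) := by
  have := hπ.1.2 _ (pair_feasible f x)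
  rwa [vsum_eq, pair_sum] at this

lemma min_chain_ineq {f : ℝ} {π : ℝ → ℝ} (hπ : MinimalValid f π) (y : ℝ →₀ ℕ) :
    π (wsum (fun r => r) y) ≤ wsum π y :=
  (chain_lemma π (fun _ => 0) (min_subadd hπ) (minval_zero hπ) rfl
    (by intros; simp) y).1

lemma min_sym {f : ℝ} {π : ℝ → ℝ} (hf : f ∈ Set.Ioo (0:ℝ) 1) (hπ : MinimalValid f π)
    (x : ℝ) : π x + π (f - x) = 1 := by
  have hge := min_sym_ge hπ x
  by_contra hne
  have hgt : 1 < π x + π (f - x) := lt_of_le_of_ne hge (fun h => hne h.symm)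
  set ε := π x + π (f - x) - 1 with hεdef
  have hε : 0 < ε := by simp only [hεdef]; linarith
  have hπx : 0 < π x := by
    rcases (hπ.1.1 x).lt_or_eq with h | h
    · exact h
    · exfalso
      have h1 : 1 < π (f - x) := by rw [← h] at hgt; linarith
      exact absurd (min_le_one hπ (f - x)) (by linarith)
  set δ := min (π x / 2) (ε * π x / 2) with hδdef
  have hδpos : 0 < δ := lt_min (by linarith) (by positivity)
  have hδ1 : δ ≤ π x / 2 := min_le_left _ _
  have hδ2 : δ ≤ ε * π x / 2 := min_le_right _ _
  set π' := Function.update π x (π x - δ) with hπ'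
  have hπ'x : π' x = π x - δ := Function.update_self x _ π
  have hπ'ne : ∀ r, r ≠ x → π' r = π r := fun r hr => Function.update_of_ne hr _ π
  have hπ'nn : ∀ r, 0 ≤ π' r := by
    intro r
    rcases eq_or_ne r x with rfl | hr
    · rw [hπ'x]; linarith
    · rw [hπ'ne r hr]; exact hπ.1.1 r
  have boundA : ∀ k : ℕ, π (f - x) - k * π x ≤ π (f - x * ((k : ℝ) + 1)) := by
    intro k
    induction k with
    | zero => norm_num
    | succ k ih =>
      have hs := min_subadd hπ (f - x * ((k : ℝ) + 2)) x
      have e : f - x * ((k : ℝ) + 2) + x = f - x * ((k : ℝ) + 1) := by ring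
      rw [e] at hs
      push_cast
      push_cast at ih
      have e2 : f - x * ((k : ℝ) + 1 + 1) = f - x * ((k : ℝ) + 2) := by ring
      rw [e2]
      linarith
  have hvalid : Valid f π' := by
    refine ⟨hπ'nn, fun y hy => ?_⟩
    obtain ⟨zy, hzy⟩ := (feas_iff f y).1 hy
    set m := y x with hm
    rw [vsum_eq]
    by_cases hm0 : m = 0
    · have : wsum π' y = wsum π y := by
        apply wsum_congr
        intro r hr
        apply hπ'ne
        intro h
        rw [Finsupp.mem_support_iff, h] at hr
        exact hr (hm ▸ hm0)
      rw [this]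
      have := hπ.1.2 y hy
      rwa [vsum_eq] at this
    · obtain ⟨k, hk⟩ : ∃ k, m = k + 1 :=
        ⟨m - 1, (Nat.succ_pred_eq_of_pos (Nat.pos_of_ne_zero hm0)).symm⟩
      have hsplit : wsum π' y = wsum π (y.erase x) + (π x - δ) * m := by
        rw [wsum_erase π' y x, hπ'x, ← hm]
        congr 1
        apply wsum_congr
        intro r hr
        rw [Finsupp.support_erase] at hr
        exact hπ'ne r (Finset.ne_of_mem_erase hr)
      have hσe : wsum (fun r => r) (y.erase x) = (f - x * m) + zy := by
        have h1 := wsum_erase (fun r => r) y x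
        have h2 : wsum (fun r => r) y = f + zy := by linarith
        rw [h2] at h1
        rw [hm]
        linarith [h1]
      have hlow : π ((f - x * m) + zy) ≤ wsum π (y.erase x) := by
        have := min_chain_ineq hπ (y.erase x)
        rwa [hσe] at this
      have hper : π ((f - x * m) + zy) = π (f - x * m) := min_per hπ _ zy
      have hA : π (f - x) - ((m : ℝ) - 1) * π x ≤ π (f - x * m) := by
        have := boundA k
        have e : ((k : ℝ) + 1) = (m : ℝ) := by rw [hk]; push_cast; ring
        rw [e] at this
        have e2 : ((k : ℝ)) = (m : ℝ) - 1 := by rw [hk]; push_cast; ring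
        rw [e2] at this
        exact this
      have hπfx : 0 ≤ π (f - x * m) := hπ.1.1 _
      rw [hsplit]
      by_cases hcase : (m : ℝ) * δ ≤ ε
      · have : 1 + ε - (m : ℝ) * δ ≤ wsum π (y.erase x) + (π x - δ) * m := by
          nlinarith [hlow, hper ▸ hlow, hA]
        nlinarith [hlow, hper, hA]
      · push_neg at hcase
        have hmnn : (0 : ℝ) ≤ (m : ℝ) := Nat.cast_nonneg m
        have h3 : ε < (m : ℝ) * (ε * π x / 2) :=
          lt_of_lt_of_le hcase (mul_le_mul_of_nonneg_left hδ2 hmnn)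
        have h4 : 2 < (m : ℝ) * π x := by nlinarith [h3, hε]
        have h5 : 1 ≤ (π x - δ) * m := by nlinarith [h4, hδ1, hmnn]
        have h6 : 0 ≤ wsum π (y.erase x) := wsum_nonneg hπ.1.1 _
        linarith
  refine hπ.2 ⟨π', hvalid, ?_, ?_⟩
  · intro r
    rcases eq_or_ne r x with rfl | hr
    · rw [hπ'x]; linarith
    · rw [hπ'ne r hr]
  · intro h
    have := congrFun h x
    rw [hπ'x] at this
    linarith

lemma sym_of_superset {f : ℝ} {π π' : ℝ → ℝ} (hf : f ∈ Set.Ioo (0:ℝ) 1)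
    (hπ : MinimalValid f π) (hv : Valid f π') (hPP : Pset f π ⊆ Pset f π') (x : ℝ) :
    π' x + π' (f - x) = 1 := by
  have hmem : (Finsupp.single x 1 + Finsupp.single (f - x) 1) ∈ Pset f π := by
    refine ⟨pair_feasible f x, ?_⟩
    rw [vsum_eq, pair_sum]
    exact min_sym hf hπ x
  have := (hPP hmem).2
  rwa [vsum_eq, pair_sum] at this

lemma min_of_superset {f : ℝ} {π π' : ℝ → ℝ} (hf : f ∈ Set.Ioo (0:ℝ) 1)
    (hπ : MinimalValid f π) (hv : Valid f π') (hPP : Pset f π ⊆ Pset f π') :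
    MinimalValid f π' := by
  refine ⟨hv, ?_⟩
  rintro ⟨ρ, hρv, hρle, hρne⟩
  obtain ⟨x₀, hx₀⟩ := Function.ne_iff.mp hρne
  have hlt : ρ x₀ < π' x₀ := lt_of_le_of_ne (hρle x₀) hx₀
  have h1 := hρv.2 _ (pair_feasible f x₀)
  rw [vsum_eq, pair_sum] at h1
  have h2 := sym_of_superset hf hπ hv hPP x₀
  have h3 := hρle (f - x₀)
  linarith

lemma eset_subset {f : ℝ} {π π' : ℝ → ℝ} (hf : f ∈ Set.Ioo (0:ℝ) 1)
    (hπ : MinimalValid f π) (hv : Valid f π') (hPP : Pset f π ⊆ Pset f π')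
    {x y : ℝ} (hE : (x, y) ∈ Eset π) : π' x + π' y = π' (x + y) := by
  have hxy : π x + π y = π (x + y) := hE
  set w := Finsupp.single x 1 + (Finsupp.single y 1 + Finsupp.single (f - (x + y)) 1) with hw
  have hwfeas : Feasible f w := by
    rw [feas_iff]
    refine ⟨0, ?_⟩
    rw [hw, wsum_add, wsum_add, wsum_single, wsum_single, wsum_single]
    push_cast; ring
  have hwsum : ∀ g : ℝ → ℝ, wsum g w = g x + g y + g (f - (x + y)) := by
    intro g
    rw [hw, wsum_add, wsum_add, wsum_single, wsum_single, wsum_single]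
    push_cast; ring
  have hwP : w ∈ Pset f π := by
    refine ⟨hwfeas, ?_⟩
    rw [vsum_eq, hwsum]
    have := min_sym hf hπ (x + y)
    linarith
  have h1 := (hPP hwP).2
  rw [vsum_eq, hwsum] at h1
  have h2 := sym_of_superset hf hπ hv hPP (x + y)
  linarith

theorem stmt7 (f : ℝ) (hf : f ∈ Set.Ioo (0 : ℝ) 1) (π : ℝ → ℝ)
    (hπ : MinimalValid f π) :
    IsFacet f π ↔
      ¬ ∃ p : ℝ → ℝ, p ≠ 0 ∧ PerturbSpace f (Eset π) p ∧
        MinimalValid f (fun x => π x + p x) := by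
  constructor
  · rintro ⟨_, hfacet⟩ ⟨p, hp0, hPS, hmin'⟩
    obtain ⟨hp_zero, hp_f, hp_add, hp_per⟩ := hPS
    -- P(π) ⊆ P(π + p)
    have hPP : Pset f π ⊆ Pset f (fun x => π x + p x) := by
      rintro y ⟨hyfeas, hysum⟩
      obtain ⟨zy, hzy⟩ := (feas_iff f y).1 hyfeas
      rw [vsum_eq] at hysum
      have hσ : wsum (fun r => r) y = f + zy := by linarith
      have hπσ : π (wsum (fun r => r) y) = wsum π y := by
        rw [hσ]
        have : π (f + (zy : ℝ)) = π f := min_per hπ f zy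
        rw [this, min_f_one hf hπ, hysum]
      have hchain := (chain_lemma π p (min_subadd hπ) (minval_zero hπ) hp_zero
        (fun a b h => hp_add (a, b) h) y).2 hπσ
      have hpσ : p (wsum (fun r => r) y) = 0 := by
        rw [hσ, hp_per f zy, hp_f]
      refine ⟨hyfeas, ?_⟩
      have hsplit : (∑ r ∈ y.support, (π r + p r) * (y r : ℝ)) = wsum π y + wsum p y := by
        simp only [wsum, add_mul, Finset.sum_add_distrib]
      rw [hsplit, ← hchain, hpσ, hysum]
      ring
    have heq := hfacet (fun x => π x + p x) hmin'.1 hPP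
    apply hp0
    funext x
    have := congrFun heq x
    simp only [Pi.zero_apply]
    linarith [this]
  · intro H
    refine ⟨hπ.1, fun π' hv hPP => ?_⟩
    by_contra hne
    apply H
    refine ⟨fun x => π' x - π x, ?_, ?_, ?_⟩
    · intro h0
      apply hne
      funext x
      have := congrFun h0 x
      simp only [Pi.zero_apply] at this
      linarith
    · have hmin' := min_of_superset hf hπ hv hPP
      refine ⟨?_, ?_, ?_, ?_⟩
      · show π' 0 - π 0 = 0
        rw [minval_zero hπ, minval_zero hmin']; ring
      · show π' f - π f = 0
        rw [min_f_one hf hπ, min_f_one hf hmin']; ring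
      · rintro ⟨x, y⟩ hE
        have h1 := eset_subset hf hπ hv hPP hE
        have h2 : π x + π y = π (x + y) := hE
        simp only
        linarith
      · intro x t
        show π' (x + t) - π (x + t) = π' x - π x
        rw [min_per hπ x t, min_per hmin' x t]
    · have hmin' := min_of_superset hf hπ hv hPP
      have hfun : (fun x => π x + (π' x - π x)) = π' := by funext x; ring
      rw [hfun]
      exact hmin'
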